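/- A group G is the union of three proper subgroups if and only if G has a quotient isomorphic to the Klein four-group ℤ/2ℤ × ℤ/2ℤ (Scorza's theorem). -/

import Mathlib

private lemma scorza_ite {P Q R : Prop} [Decidable P] [Decidable Q] [Decidable R]
    (h : R ↔ (P ↔ Q)) :
    (if R then (0 : ZMod 2) else 1) = (if P then 0 else 1) + (if Q then 0 else 1) := by
  by_cases p : P <;> by_cases q : Q <;> simp_all
  all_goals decide

/-- If `G = A ∪ B ∪ C` with `a ∈ A \ (B ∪ C)`, then products of two elements
outside `A` lie in `A`. -/
private lemma scorza_key {G : Type*} [Group G] {A B C : Subgroup G}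
    (hcov : ∀ g : G, g ∈ A ∨ g ∈ B ∨ g ∈ C)
    {a : G} (haA : a ∈ A) (haB : a ∉ B) (haC : a ∉ C) :
    ∀ x y : G, x ∉ A → y ∉ A → x * y ∈ A := by
  -- first: no element outside A lies in both B and C
  have hBC : ∀ t : G, t ∉ A → ¬ (t ∈ B ∧ t ∈ C) := by
    rintro t htA ⟨htB, htC⟩
    have h1 : a * t ∉ A := fun h => htA (by simpa using A.mul_mem (A.inv_mem haA) h)
    have h2 : a * t ∉ B := fun h => haB (by simpa using B.mul_mem h (B.inv_mem htB))
    have h3 : a * t ∉ C := fun h => haC (by simpa using C.mul_mem h (C.inv_mem htC))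
    rcases hcov (a * t) with h | h | h <;> [exact h1 h; exact h2 h; exact h3 h]
  intro x y hx hy
  by_contra hxy
  have hax : a * x ∉ A := fun h => hx (by simpa using A.mul_mem (A.inv_mem haA) h)
  have haxy : a * (x * y) ∉ A := fun h => hxy (by simpa using A.mul_mem (A.inv_mem haA) h)
  have hxd : x ∈ B ∨ x ∈ C := by rcases hcov x with h | h | h <;> tauto
  have hyd : y ∈ B ∨ y ∈ C := by rcases hcov y with h | h | h <;> tauto
  rcases hxd with hxB | hxC
  · have hxC : x ∉ C := fun h => hBC x hx ⟨hxB, h⟩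
    rcases hyd with hyB | hyC
    · -- x, y ∈ B
      have hyC : y ∉ C := fun h => hBC y hy ⟨hyB, h⟩
      have h1 : a * x ∈ C := by
        rcases hcov (a * x) with h | h | h
        · exact absurd h hax
        · exact absurd (by simpa using B.mul_mem h (B.inv_mem hxB)) haB
        · exact h
      have h2 : a * (x * y) ∈ C := by
        rcases hcov (a * (x * y)) with h | h | h
        · exact absurd h haxy
        · exact absurd (by simpa [mul_assoc] using B.mul_mem h (B.inv_mem (B.mul_mem hxB hyB))) haB
        · exact h
      exact hyC (by simpa [mul_assoc] using C.mul_mem (C.inv_mem h1) h2)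
    · -- x ∈ B, y ∈ C
      have hyB : y ∉ B := fun h => hBC y hy ⟨h, hyC⟩
      rcases hcov (x * y) with h | h | h
      · exact hxy h
      · exact hyB (by simpa using B.mul_mem (B.inv_mem hxB) h)
      · exact hxC (by simpa using C.mul_mem h (C.inv_mem hyC))
  · have hxB : x ∉ B := fun h => hBC x hx ⟨h, hxC⟩
    rcases hyd with hyB | hyC
    · -- x ∈ C, y ∈ B
      rcases hcov (x * y) with h | h | h
      · exact hxy h
      · exact hxB (by simpa using B.mul_mem h (B.inv_mem hyB))
      · exact (fun h' => hBC y hy ⟨hyB, h'⟩) (by simpa using C.mul_mem (C.inv_mem hxC) h)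
    · -- x, y ∈ C
      have hyB : y ∉ B := fun h => hBC y hy ⟨h, hyC⟩
      have h1 : a * x ∈ B := by
        rcases hcov (a * x) with h | h | h
        · exact absurd h hax
        · exact h
        · exact absurd (by simpa using C.mul_mem h (C.inv_mem hxC)) haC
      have h2 : a * (x * y) ∈ B := by
        rcases hcov (a * (x * y)) with h | h | h
        · exact absurd h haxy
        · exact h
        · exact absurd (by simpa [mul_assoc] using C.mul_mem h (C.inv_mem (C.mul_mem hxC hyC))) haC
      exact hyB (by simpa [mul_assoc] using B.mul_mem (B.inv_mem h1) h2)

/-- Scorza's theorem: a group is the union of three proper subgroups iff it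
surjects onto the Klein four-group `ℤ/2 × ℤ/2`. -/
theorem scorza {G : Type*} [Group G] :
    (∃ A B C : Subgroup G, A ≠ ⊤ ∧ B ≠ ⊤ ∧ C ≠ ⊤ ∧
      ∀ g : G, g ∈ A ∨ g ∈ B ∨ g ∈ C) ↔
    ∃ f : G →* Multiplicative (ZMod 2 × ZMod 2), Function.Surjective f := by
  classical
  constructor
  · rintro ⟨A, B, C, hA, hB, hC, hcov⟩
    -- no group is the union of two proper subgroups
    have two_cover : ∀ (X Y : Subgroup G), X ≠ ⊤ → Y ≠ ⊤ → ¬ ∀ g : G, g ∈ X ∨ g ∈ Y := by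
      intro X Y hX hY h
      obtain ⟨x, hx⟩ : ∃ x : G, x ∉ X := by
        by_contra h'; push_neg at h'; exact hX (Subgroup.eq_top_iff' X |>.2 h')
      obtain ⟨y, hy⟩ : ∃ y : G, y ∉ Y := by
        by_contra h'; push_neg at h'; exact hY (Subgroup.eq_top_iff' Y |>.2 h')
      have hxY : x ∈ Y := (h x).resolve_left hx
      have hyX : y ∈ X := (h y).resolve_right hy
      rcases h (x * y) with h' | h'
      · exact hx (by simpa using X.mul_mem h' (X.inv_mem hyX))
      · exact hy (by simpa using Y.mul_mem (Y.inv_mem hxY) h')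
    -- irredundancy witnesses
    obtain ⟨a, haA, haB, haC⟩ : ∃ a : G, a ∈ A ∧ a ∉ B ∧ a ∉ C := by
      by_contra h; push_neg at h
      exact two_cover B C hB hC fun g => by
        have h1 := hcov g; have h2 := h g; tauto
    obtain ⟨b, hbB, hbA, hbC⟩ : ∃ b : G, b ∈ B ∧ b ∉ A ∧ b ∉ C := by
      by_contra h; push_neg at h
      exact two_cover A C hA hC fun g => by
        have h1 := hcov g; have h2 := h g; tauto
    obtain ⟨c, hcC, hcA, hcB⟩ : ∃ c : G, c ∈ C ∧ c ∉ A ∧ c ∉ B := by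
      by_contra h; push_neg at h
      exact two_cover A B hA hB fun g => by
        have h1 := hcov g; have h2 := h g; tauto
    have keyA : ∀ x y : G, x ∉ A → y ∉ A → x * y ∈ A := scorza_key hcov haA haB haC
    have keyB : ∀ x y : G, x ∉ B → y ∉ B → x * y ∈ B :=
      scorza_key (C := C) (fun g => by rcases hcov g with h | h | h <;> tauto) hbB hbA hbC
    have hAmul : ∀ x y : G, x * y ∈ A ↔ (x ∈ A ↔ y ∈ A) := by
      intro x y
      constructor
      · intro h
        constructor
        · intro hx; simpa using A.mul_mem (A.inv_mem hx) h
        · intro hy; simpa using A.mul_mem h (A.inv_mem hy)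
      · intro h
        by_cases hx : x ∈ A
        · exact A.mul_mem hx (h.1 hx)
        · exact keyA x y hx (fun hy => hx (h.2 hy))
    have hBmul : ∀ x y : G, x * y ∈ B ↔ (x ∈ B ↔ y ∈ B) := by
      intro x y
      constructor
      · intro h
        constructor
        · intro hx; simpa using B.mul_mem (B.inv_mem hx) h
        · intro hy; simpa using B.mul_mem h (B.inv_mem hy)
      · intro h
        by_cases hx : x ∈ B
        · exact B.mul_mem hx (h.1 hx)
        · exact keyB x y hx (fun hy => hx (h.2 hy))
    set val : G → ZMod 2 × ZMod 2 :=
      fun g => (if g ∈ A then 0 else 1, if g ∈ B then 0 else 1) with hval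
    refine ⟨MonoidHom.mk' (fun g => Multiplicative.ofAdd (val g)) ?_, ?_⟩
    · intro x y
      have h1 : val (x * y) = val x + val y := by
        refine Prod.ext ?_ ?_
        · exact scorza_ite (hAmul x y)
        · exact scorza_ite (hBmul x y)
      simp [h1]
    · intro t
      have hz : ∀ z : ZMod 2, z = 0 ∨ z = 1 := by decide
      have : ∃ g : G, val g = Multiplicative.toAdd t := by
        have ht : Multiplicative.toAdd t =
            ((Multiplicative.toAdd t).1, (Multiplicative.toAdd t).2) := rfl
        rcases hz (Multiplicative.toAdd t).1 with h1 | h1 <;>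
          rcases hz (Multiplicative.toAdd t).2 with h2 | h2 <;>
          rw [ht, h1, h2]
        · exact ⟨1, by simp [hval, A.one_mem, B.one_mem]⟩
        · exact ⟨a, by simp [hval, haA, haB]⟩
        · exact ⟨b, by simp [hval, hbA, hbB]⟩
        · exact ⟨c, by simp [hval, hcA, hcB]⟩
      obtain ⟨g, hg⟩ := this
      exact ⟨g, by simp [hg]⟩
  · rintro ⟨f, hf⟩
    let π1 : Multiplicative (ZMod 2 × ZMod 2) →* Multiplicative (ZMod 2) :=
      AddMonoidHom.toMultiplicative (AddMonoidHom.fst (ZMod 2) (ZMod 2))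
    let π2 : Multiplicative (ZMod 2 × ZMod 2) →* Multiplicative (ZMod 2) :=
      AddMonoidHom.toMultiplicative (AddMonoidHom.snd (ZMod 2) (ZMod 2))
    let π3 : Multiplicative (ZMod 2 × ZMod 2) →* Multiplicative (ZMod 2) :=
      AddMonoidHom.toMultiplicative (AddMonoidHom.fst (ZMod 2) (ZMod 2)
        + AddMonoidHom.snd (ZMod 2) (ZMod 2))
    refine ⟨(π1.comp f).ker, (π2.comp f).ker, (π3.comp f).ker, ?_, ?_, ?_, ?_⟩
    · obtain ⟨g, hg⟩ := hf (Multiplicative.ofAdd (1, 0))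
      intro h
      have hg' : g ∈ (π1.comp f).ker := h ▸ Subgroup.mem_top g
      rw [MonoidHom.mem_ker] at hg'
      simp [MonoidHom.comp_apply, hg, π1] at hg'
    · obtain ⟨g, hg⟩ := hf (Multiplicative.ofAdd (0, 1))
      intro h
      have hg' : g ∈ (π2.comp f).ker := h ▸ Subgroup.mem_top g
      rw [MonoidHom.mem_ker] at hg'
      simp [MonoidHom.comp_apply, hg, π2] at hg'
    · obtain ⟨g, hg⟩ := hf (Multiplicative.ofAdd (1, 0))
      intro h
      have hg' : g ∈ (π3.comp f).ker := h ▸ Subgroup.mem_top g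
      rw [MonoidHom.mem_ker] at hg'
      simp [MonoidHom.comp_apply, hg, π3] at hg'
    · intro g
      have h : ∀ z : ZMod 2 × ZMod 2, z.1 = 0 ∨ z.2 = 0 ∨ z.1 + z.2 = 0 := by decide
      rcases h (Multiplicative.toAdd (f g)) with h' | h' | h'
      · exact Or.inl (by rw [MonoidHom.mem_ker]; simp [MonoidHom.comp_apply, π1, h'])
      · exact Or.inr (Or.inl (by rw [MonoidHom.mem_ker]; simp [MonoidHom.comp_apply, π2, h']))
      · exact Or.inr (Or.inr (by rw [MonoidHom.mem_ker]; simp [MonoidHom.comp_apply, π3]; rw [← ofAdd_add, h', ofAdd_zero]))
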